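/- The system ẋ = x(x+1), ẏ = y^2 + (ax+b)y + cx^2 + dx + e has no periodic orbits: every periodic solution of a planar C¹ vector field must enclose an equilibrium point, but all equilibria of this system lie on the invariant lines x = 0 and x = -1, which no periodic orbit can cross. -/

import Mathlib

open Set Filter

/-- A periodic solution of a 1-D autonomous quadratic ODE is constant. -/
lemma quad_periodic_const (B C : ℝ) (u : ℝ → ℝ)
    (hu : ∀ t, HasDerivAt u (u t ^ 2 + B * u t + C) t)
    (T : ℝ) (hT : 0 < T) (hper : ∀ t, u (t + T) = u t) :
    ∀ t s : ℝ, u t = u s := by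
  have hcont : Continuous u := by
    rw [continuous_iff_continuousAt]
    exact fun t => (hu t).differentiableAt.continuousAt
  have hPer : Function.Periodic u T := hper
  obtain ⟨t0, ht0, hmax⟩ := isCompact_Icc.exists_isMaxOn (s := Icc 0 T)
    (nonempty_Icc.mpr hT.le) hcont.continuousOn
  have hgmax : ∀ t, u t ≤ u t0 := by
    intro t
    obtain ⟨y, hy, hxy⟩ := hPer.exists_mem_Ico₀ hT t
    exact hxy ▸ hmax (Ico_subset_Icc_self hy)
  obtain ⟨t1, ht1, hmin⟩ := isCompact_Icc.exists_isMinOn (s := Icc 0 T)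
    (nonempty_Icc.mpr hT.le) hcont.continuousOn
  have hgmin : ∀ t, u t1 ≤ u t := by
    intro t
    obtain ⟨y, hy, hxy⟩ := hPer.exists_mem_Ico₀ hT t
    exact hxy ▸ hmin (Ico_subset_Icc_self hy)
  set m := u t1 with hm
  set M := u t0 with hM
  have heq : M ^ 2 + B * M + C = 0 := by
    have hloc : IsLocalMax u t0 := Filter.Eventually.of_forall hgmax
    exact hloc.hasDerivAt_eq_zero (hu t0)
  set K : NNReal := (2 * (|m| + |M|) + |B|).toNNReal with hK
  have hKcoe : (K : ℝ) = max (2 * (|m| + |M|) + |B|) 0 := Real.coe_toNNReal' _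
  have habs : ∀ y : ℝ, y ∈ Icc m M → |y| ≤ |m| + |M| := by
    intro y hy
    rcases hy with ⟨h1', h2'⟩
    rcases abs_cases m with ⟨e1, _⟩ | ⟨e1, _⟩ <;> rcases abs_cases M with ⟨e2, _⟩ | ⟨e2, _⟩ <;>
      rcases abs_cases y with ⟨e3, _⟩ | ⟨e3, _⟩ <;> nlinarith [abs_nonneg m, abs_nonneg M]
  have hLip : LipschitzOnWith K (fun y => y ^ 2 + B * y + C) (Icc m M) := by
    apply LipschitzOnWith.of_dist_le_mul
    intro y hy z hz
    simp only [Real.dist_eq]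
    have h1 : y ^ 2 + B * y + C - (z ^ 2 + B * z + C) = (y + z + B) * (y - z) := by ring
    rw [h1, abs_mul]
    have hbd : |y + z + B| ≤ (K : ℝ) := by
      rw [hKcoe]
      have h2 : |y + z + B| ≤ |y| + |z| + |B| :=
        (abs_add_le _ _).trans (by gcongr; exact abs_add_le _ _)
      have h3 := habs y hy
      have h4 := habs z hz
      have : |y + z + B| ≤ 2 * (|m| + |M|) + |B| := by linarith
      exact this.trans (le_max_left _ _)
    exact mul_le_mul_of_nonneg_right hbd (abs_nonneg _)
  -- uniqueness against the constant solution `M`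
  have hconst : ∀ t, u t = M := by
    intro t
    set A : ℝ := min t t0 - 1 with hA
    set Bb : ℝ := max t t0 + 1 with hB
    have htmem : t ∈ Ioo A Bb :=
      ⟨by show t ⊓ t0 - 1 < t; linarith [min_le_left t t0],
       by show t < t ⊔ t0 + 1; linarith [le_max_left t t0]⟩
    have ht0mem : t0 ∈ Ioo A Bb :=
      ⟨by show t ⊓ t0 - 1 < t0; linarith [min_le_right t t0],
       by show t0 < t ⊔ t0 + 1; linarith [le_max_right t t0]⟩
    have := ODE_solution_unique_of_mem_Ioo (v := fun _ y => y ^ 2 + B * y + C)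
      (s := fun _ => Icc m M) (K := K) (fun _ _ => hLip) (t₀ := t0) (a := A) (b := Bb)
      (f := u) (g := fun _ => M) ht0mem
      (fun τ _ => ⟨hu τ, ⟨hgmin τ, hgmax τ⟩⟩)
      (fun τ _ => ⟨by simpa [heq] using (hasDerivAt_const τ M),
        ⟨hgmin t0, le_rfl⟩⟩) rfl
    exact this htmem
  intro t s
  rw [hconst t, hconst s]

theorem stmt_9 (a b c d e : ℝ) (γ : ℝ → ℝ × ℝ)
    (hode : ∀ t : ℝ, HasDerivAt γ
      ((γ t).1 * ((γ t).1 + 1),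
       (γ t).2 ^ 2 + (a * (γ t).1 + b) * (γ t).2 + c * (γ t).1 ^ 2 +
         d * (γ t).1 + e) t)
    (T : ℝ) (hT : 0 < T) (hper : ∀ t, γ (t + T) = γ t) :
    ∀ t s : ℝ, γ t = γ s := by
  set x : ℝ → ℝ := fun t => (γ t).1 with hxdef
  set y : ℝ → ℝ := fun t => (γ t).2 with hydef
  have hx : ∀ t, HasDerivAt x (x t ^ 2 + 1 * x t + 0) t := by
    intro t
    have h := (ContinuousLinearMap.fst ℝ ℝ ℝ).hasFDerivAt.comp_hasDerivAt t (hode t)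
    exact h.congr_deriv (by simp only [hxdef, ContinuousLinearMap.coe_fst']; ring)
  have hxper : ∀ t, x (t + T) = x t := fun t => congrArg Prod.fst (hper t)
  have hxc := quad_periodic_const 1 0 x hx T hT hxper
  have hy : ∀ t, HasDerivAt y
      (y t ^ 2 + (a * x 0 + b) * y t + (c * x 0 ^ 2 + d * x 0 + e)) t := by
    intro t
    have h := (ContinuousLinearMap.snd ℝ ℝ ℝ).hasFDerivAt.comp_hasDerivAt t (hode t)
    have hx0 : x t = x 0 := hxc t 0
    exact h.congr_deriv (by rw [← hx0]; simp only [hxdef, hydef, ContinuousLinearMap.coe_snd']; ring)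
  have hyper : ∀ t, y (t + T) = y t := fun t => congrArg Prod.snd (hper t)
  have hyc := quad_periodic_const (a * x 0 + b) (c * x 0 ^ 2 + d * x 0 + e) y hy T hT hyper
  intro t s
  exact Prod.ext (hxc t s) (hyc t s)
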